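/- Let Σxx ∈ ℝ^{dx×dx} and Σyy ∈ ℝ^{dy×dy} be symmetric positive definite with all eigenvalues in the interval [γ, 1] for some γ > 0, let Σxy ∈ ℝ^{dx×dy}, set ρ1 = ‖Σxx^{-1/2} Σxy Σyy^{-1/2}‖, and let λ > ρ1. Define the symmetric block matrix A_λ = [[λ Σxx, −Σxy],[−Σxyᵀ, λ Σyy]] ∈ ℝ^{(dx+dy)×(dx+dy)}. Then A_λ is positive definite, its smallest eigenvalue is at least (λ − ρ1)·γ, and its largest eigenvalue is at most λ + ρ1. -/

import Mathlib

open Matrix Finset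

/-- Euclidean norm of a vector in `ℝ^d`. -/
noncomputable def vnorm {n : Type*} [Fintype n] (x : n → ℝ) : ℝ := Real.sqrt (x ⬝ᵥ x)

/-- Spectral (operator) norm of a real matrix: the supremum of `‖A x‖` over unit vectors `x`. -/
noncomputable def specNorm {m n : Type*} [Fintype m] [Fintype n] (A : Matrix m n ℝ) : ℝ :=
  sSup {c : ℝ | ∃ x : n → ℝ, vnorm x = 1 ∧ c = vnorm (A.mulVec x)}

/-- The square root of a positive semidefinite matrix, as `Matrix.PosSemidef.sqrt` was defined
in the older Mathlib (removed since). -/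
noncomputable def posSemidefSqrt {n : Type*} [Fintype n] [DecidableEq n]
    {A : Matrix n n ℝ} (hA : A.PosSemidef) : Matrix n n ℝ :=
  hA.1.eigenvectorUnitary.1 * diagonal ((↑) ∘ (√·) ∘ hA.1.eigenvalues) *
    (star hA.1.eigenvectorUnitary : Matrix n n ℝ)

section aux
variable {n : Type*} [Fintype n]

lemma dot_self_nonneg (a : n → ℝ) : 0 ≤ a ⬝ᵥ a :=
  Finset.sum_nonneg fun i _ => mul_self_nonneg _

lemma vnorm_nonneg (a : n → ℝ) : 0 ≤ vnorm a := Real.sqrt_nonneg _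

lemma vnorm_sq (a : n → ℝ) : vnorm a ^ 2 = a ⬝ᵥ a :=
  Real.sq_sqrt (dot_self_nonneg a)

lemma dot_self_pos {a : n → ℝ} (h : a ≠ 0) : 0 < a ⬝ᵥ a :=
  lt_of_le_of_ne (dot_self_nonneg a) (fun h' => h (dotProduct_self_eq_zero.mp h'.symm))

lemma vnorm_pos {a : n → ℝ} (h : a ≠ 0) : 0 < vnorm a :=
  Real.sqrt_pos.mpr (dot_self_pos h)

lemma dot_eq_inner (a b : n → ℝ) :
    a ⬝ᵥ b = inner (𝕜 := ℝ) ((WithLp.equiv 2 (n → ℝ)).symm a) ((WithLp.equiv 2 (n → ℝ)).symm b) := by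
  simp [dotProduct, PiLp.inner_apply, RCLike.inner_apply, mul_comm]

lemma vnorm_eq (a : n → ℝ) : vnorm a = ‖(WithLp.equiv 2 (n → ℝ)).symm a‖ := by
  rw [vnorm, dot_eq_inner, real_inner_self_eq_norm_mul_norm,
    Real.sqrt_mul_self (norm_nonneg _)]

lemma abs_dot_le (a b : n → ℝ) : |a ⬝ᵥ b| ≤ vnorm a * vnorm b := by
  rw [dot_eq_inner, vnorm_eq, vnorm_eq]
  exact abs_real_inner_le_norm _ _

lemma vnorm_smul (c : ℝ) (a : n → ℝ) : vnorm (c • a) = |c| * vnorm a := by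
  rw [vnorm_eq, vnorm_eq, WithLp.equiv_symm_apply, WithLp.toLp_smul, norm_smul, Real.norm_eq_abs]

end aux

section spec
variable {m n : Type*} [Fintype m] [Fintype n]

lemma vnorm_mulVec_le_frob (A : Matrix m n ℝ) (x : n → ℝ) :
    vnorm (A *ᵥ x) ≤ Real.sqrt (∑ i, (fun j => A i j) ⬝ᵥ (fun j => A i j)) * vnorm x := by
  rw [vnorm, vnorm, ← Real.sqrt_mul (Finset.sum_nonneg fun i _ => dot_self_nonneg _)]
  apply Real.sqrt_le_sqrt
  rw [dotProduct, Finset.sum_mul]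
  apply Finset.sum_le_sum
  intro i _
  have h1 : (A *ᵥ x) i = (fun j => A i j) ⬝ᵥ x := rfl
  rw [h1]
  have h2 := abs_dot_le (fun j => A i j) x
  calc (fun j => A i j) ⬝ᵥ x * ((fun j => A i j) ⬝ᵥ x)
      = |(fun j => A i j) ⬝ᵥ x| ^ 2 := by rw [sq_abs]; ring
    _ ≤ (vnorm (fun j => A i j) * vnorm x) ^ 2 := by
        apply pow_le_pow_left₀ (abs_nonneg _) h2
    _ = (fun j => A i j) ⬝ᵥ (fun j => A i j) * (x ⬝ᵥ x) := by
        rw [mul_pow, vnorm_sq, vnorm_sq]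

lemma specNorm_bddAbove (A : Matrix m n ℝ) :
    BddAbove {c : ℝ | ∃ x : n → ℝ, vnorm x = 1 ∧ c = vnorm (A.mulVec x)} := by
  refine ⟨Real.sqrt (∑ i, (fun j => A i j) ⬝ᵥ (fun j => A i j)), ?_⟩
  rintro c ⟨x, hx, rfl⟩
  simpa [hx] using vnorm_mulVec_le_frob A x

lemma specNorm_nonneg (A : Matrix m n ℝ) : 0 ≤ specNorm A := by
  by_cases h : ∃ x : n → ℝ, vnorm x = 1
  · obtain ⟨x, hx⟩ := h
    exact le_trans (vnorm_nonneg (A *ᵥ x))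
      (le_csSup (specNorm_bddAbove A) ⟨x, hx, rfl⟩)
  · have : {c : ℝ | ∃ x : n → ℝ, vnorm x = 1 ∧ c = vnorm (A.mulVec x)} = ∅ := by
      ext c; simp only [Set.mem_setOf_eq, Set.mem_empty_iff_false, iff_false]
      rintro ⟨x, hx, -⟩; exact h ⟨x, hx⟩
    rw [specNorm, this, Real.sSup_empty]

lemma vnorm_mulVec_le (A : Matrix m n ℝ) (x : n → ℝ) :
    vnorm (A *ᵥ x) ≤ specNorm A * vnorm x := by
  by_cases hx : x = 0
  · simp [hx, vnorm, Real.sqrt_zero, dotProduct]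
  · have hvx := vnorm_pos hx
    set u : n → ℝ := (vnorm x)⁻¹ • x with hu
    have hun : vnorm u = 1 := by
      rw [hu, vnorm_smul, abs_of_pos (inv_pos.mpr hvx), inv_mul_cancel₀ hvx.ne']
    have hmem : vnorm (A *ᵥ u) ∈ {c : ℝ | ∃ x : n → ℝ, vnorm x = 1 ∧ c = vnorm (A.mulVec x)} :=
      ⟨u, hun, rfl⟩
    have := le_csSup (specNorm_bddAbove A) hmem
    have hAu : vnorm (A *ᵥ u) = (vnorm x)⁻¹ * vnorm (A *ᵥ x) := by
      rw [hu, mulVec_smul, vnorm_smul, abs_of_pos (inv_pos.mpr hvx)]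
    rw [hAu] at this
    calc vnorm (A *ᵥ x) = vnorm x * ((vnorm x)⁻¹ * vnorm (A *ᵥ x)) := by
          field_simp
      _ ≤ vnorm x * specNorm A := by
          exact mul_le_mul_of_nonneg_left this hvx.le
      _ = specNorm A * vnorm x := mul_comm _ _

end spec

section quad
variable {n : Type*} [Fintype n] [DecidableEq n]

lemma quad_ge {M : Matrix n n ℝ} (hM : M.IsHermitian) {c : ℝ}
    (h : ∀ μ : ℝ, (∃ v : n → ℝ, v ≠ 0 ∧ M *ᵥ v = μ • v) → c ≤ μ) (v : n → ℝ) :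
    c * (v ⬝ᵥ v) ≤ v ⬝ᵥ (M *ᵥ v) := by
  have key : ∀ w : n → ℝ, (M - c • 1) *ᵥ w = M *ᵥ w - c • w := by
    intro w; rw [sub_mulVec, smul_mulVec, one_mulVec]
  have h1 : ((c : ℝ) • (1 : Matrix n n ℝ)).IsHermitian := by
    unfold Matrix.IsHermitian; simp
  have hNh : (M - c • 1).IsHermitian := hM.sub h1
  have hpsd : (M - c • 1).PosSemidef := by
    rw [hNh.posSemidef_iff_eigenvalues_nonneg]
    intro i
    show 0 ≤ hNh.eigenvalues i
    have hb := hNh.mulVec_eigenvectorBasis i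
    have hbne : (⇑(hNh.eigenvectorBasis i) : n → ℝ) ≠ 0 := by
      intro h0
      exact hNh.eigenvectorBasis.orthonormal.ne_zero i (by ext j; exact congrFun h0 j)
    rw [key] at hb
    have hMv : M *ᵥ ⇑(hNh.eigenvectorBasis i) =
        (hNh.eigenvalues i + c) • ⇑(hNh.eigenvectorBasis i) := by
      rw [add_smul]
      linear_combination (norm := module) hb
    have := h _ ⟨_, hbne, hMv⟩
    linarith
  have h2 := hpsd.dotProduct_mulVec_nonneg v
  rw [show (star v : n → ℝ) = v from star_trivial v, key, dotProduct_sub, dotProduct_smul,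
    smul_eq_mul] at h2
  linarith

lemma quad_le {M : Matrix n n ℝ} (hM : M.IsHermitian) {c : ℝ}
    (h : ∀ μ : ℝ, (∃ v : n → ℝ, v ≠ 0 ∧ M *ᵥ v = μ • v) → μ ≤ c) (v : n → ℝ) :
    v ⬝ᵥ (M *ᵥ v) ≤ c * (v ⬝ᵥ v) := by
  have h' : ∀ μ : ℝ, (∃ w : n → ℝ, w ≠ 0 ∧ (-M) *ᵥ w = μ • w) → -c ≤ μ := by
    rintro μ ⟨w, hw, hmw⟩
    have : M *ᵥ w = (-μ) • w := by
      rw [neg_smul, ← hmw, neg_mulVec, neg_neg]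
    have := h _ ⟨w, hw, this⟩
    linarith
  have := quad_ge hM.neg h' v
  rw [neg_mulVec, dotProduct_neg] at this
  linarith
end quad

lemma conjT_eq_transpose {m n : Type*} (M : Matrix m n ℝ) : Mᴴ = Mᵀ := by
  ext i j; simp [conjTranspose_apply]

lemma psqrt_mul_self {n : Type*} [Fintype n] [DecidableEq n] {A : Matrix n n ℝ}
    (hA : A.PosSemidef) : posSemidefSqrt hA * posSemidefSqrt hA = A := by
  have hU : (star hA.1.eigenvectorUnitary : Matrix n n ℝ) * hA.1.eigenvectorUnitary.1 = 1 :=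
    Unitary.coe_star_mul_self _
  have hD : diagonal ((↑) ∘ (√·) ∘ hA.1.eigenvalues) * diagonal ((↑) ∘ (√·) ∘ hA.1.eigenvalues)
      = diagonal ((RCLike.ofReal : ℝ → ℝ) ∘ hA.1.eigenvalues) := by
    rw [diagonal_mul_diagonal]; congr 1; funext i
    simp [Real.mul_self_sqrt (hA.eigenvalues_nonneg i)]
  conv_rhs => rw [hA.1.spectral_theorem, Unitary.conjStarAlgAut_apply]
  unfold posSemidefSqrt
  rw [show ∀ U D V : Matrix n n ℝ, U * D * V * (U * D * V) = U * (D * (V * U) * D) * V by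
    intro U D V; simp only [Matrix.mul_assoc], hU, Matrix.mul_one, hD, Matrix.mul_assoc]

lemma psqrt_herm {n : Type*} [Fintype n] [DecidableEq n] {A : Matrix n n ℝ}
    (hA : A.PosSemidef) : (posSemidefSqrt hA)ᴴ = posSemidefSqrt hA := by
  unfold posSemidefSqrt
  simp [conjTranspose_mul, Matrix.star_eq_conjTranspose, diagonal_conjTranspose, Matrix.mul_assoc]

lemma dot_mulVec_symm {m n : Type*} [Fintype m] [Fintype n] (M : Matrix m n ℝ)
    (u : m → ℝ) (w : n → ℝ) : u ⬝ᵥ (M *ᵥ w) = (Mᵀ *ᵥ u) ⬝ᵥ w := by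
  rw [dotProduct_mulVec, mulVec_transpose]


/-- the shifted matrix `A_λ = [[λΣxx, −Σxy],[−Σxyᵀ, λΣyy]]` is positive
definite with eigenvalues in `[(λ−ρ₁)γ, λ+ρ₁]`. -/
theorem stmt_9 {dx dy : ℕ}
    (Sxx : Matrix (Fin dx) (Fin dx) ℝ) (Syy : Matrix (Fin dy) (Fin dy) ℝ)
    (Sxy : Matrix (Fin dx) (Fin dy) ℝ)
    (hx : Sxx.PosDef) (hy : Syy.PosDef)
    (γ : ℝ) (hγ : 0 < γ)
    (hevx : ∀ μ : ℝ, (∃ v : Fin dx → ℝ, v ≠ 0 ∧ Sxx.mulVec v = μ • v) → γ ≤ μ ∧ μ ≤ 1)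
    (hevy : ∀ μ : ℝ, (∃ v : Fin dy → ℝ, v ≠ 0 ∧ Syy.mulVec v = μ • v) → γ ≤ μ ∧ μ ≤ 1)
    (ρ1 : ℝ) (hρ1 : ρ1 = specNorm ((posSemidefSqrt hx.posSemidef)⁻¹ * Sxy * (posSemidefSqrt hy.posSemidef)⁻¹))
    (lam : ℝ) (hlam : ρ1 < lam)
    (Alam : Matrix (Fin dx ⊕ Fin dy) (Fin dx ⊕ Fin dy) ℝ)
    (hA : Alam = Matrix.fromBlocks (lam • Sxx) (-Sxy) (-Sxyᵀ) (lam • Syy)) :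
    Alam.PosDef ∧
    ∀ μ : ℝ, (∃ v : Fin dx ⊕ Fin dy → ℝ, v ≠ 0 ∧ Alam.mulVec v = μ • v) →
      (lam - ρ1) * γ ≤ μ ∧ μ ≤ lam + ρ1 := by
  set P := posSemidefSqrt hx.posSemidef with hPdef
  set Q := posSemidefSqrt hy.posSemidef with hQdef
  set T := P⁻¹ * Sxy * Q⁻¹ with hTdef
  have hPP : P * P = Sxx := psqrt_mul_self hx.posSemidef
  have hQQ : Q * Q = Syy := psqrt_mul_self hy.posSemidef
  have hPt : Pᵀ = P := by rw [← conjT_eq_transpose]; exact psqrt_herm hx.posSemidef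
  have hQt : Qᵀ = Q := by rw [← conjT_eq_transpose]; exact psqrt_herm hy.posSemidef
  have hPdet : IsUnit P.det := by
    refine isUnit_iff_ne_zero.mpr fun h0 => ?_
    have h2 : P.det * P.det = Sxx.det := by rw [← det_mul, hPP]
    rw [h0, mul_zero] at h2
    exact hx.det_pos.ne' h2.symm
  have hQdet : IsUnit Q.det := by
    refine isUnit_iff_ne_zero.mpr fun h0 => ?_
    have h2 : Q.det * Q.det = Syy.det := by rw [← det_mul, hQQ]
    rw [h0, mul_zero] at h2
    exact hy.det_pos.ne' h2.symm
  have hmat : P * T * Q = Sxy := by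
    rw [hTdef]
    calc P * (P⁻¹ * Sxy * Q⁻¹) * Q = (P * P⁻¹) * Sxy * (Q⁻¹ * Q) := by
          simp only [Matrix.mul_assoc]
      _ = Sxy := by
          rw [Matrix.mul_nonsing_inv _ hPdet, Matrix.nonsing_inv_mul _ hQdet,
            Matrix.one_mul, Matrix.mul_one]
  have hρnn : 0 ≤ ρ1 := hρ1 ▸ specNorm_nonneg T
  clear_value P Q T
  clear hPdef hQdef hTdef
  -- key quadratic bounds
  have key : ∀ z : Fin dx ⊕ Fin dy → ℝ,
      ((lam - ρ1) * γ) * (z ⬝ᵥ z) ≤ z ⬝ᵥ (Alam *ᵥ z) ∧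
      z ⬝ᵥ (Alam *ᵥ z) ≤ (lam + ρ1) * (z ⬝ᵥ z) := by
    intro z
    set u : Fin dx → ℝ := z ∘ Sum.inl with hu
    set v : Fin dy → ℝ := z ∘ Sum.inr with hv
    set qx : ℝ := u ⬝ᵥ (Sxx *ᵥ u) with hqx
    set qy : ℝ := v ⬝ᵥ (Syy *ᵥ v) with hqy
    have hqxl : γ * (u ⬝ᵥ u) ≤ qx := quad_ge hx.1 (fun μ hμ => (hevx μ hμ).1) u
    have hqxu : qx ≤ 1 * (u ⬝ᵥ u) := quad_le hx.1 (fun μ hμ => (hevx μ hμ).2) u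
    have hqyl : γ * (v ⬝ᵥ v) ≤ qy := quad_ge hy.1 (fun μ hμ => (hevy μ hμ).1) v
    have hqyu : qy ≤ 1 * (v ⬝ᵥ v) := quad_le hy.1 (fun μ hμ => (hevy μ hμ).2) v
    have hzz : z ⬝ᵥ z = u ⬝ᵥ u + v ⬝ᵥ v := by
      conv_lhs => rw [← Sum.elim_comp_inl_inr z]
      rw [sumElim_dotProduct_sumElim]
    have hform : z ⬝ᵥ (Alam *ᵥ z) = lam * qx + lam * qy - 2 * (u ⬝ᵥ (Sxy *ᵥ v)) := by
      conv_lhs => rw [hA, ← Sum.elim_comp_inl_inr z]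
      rw [fromBlocks_mulVec, sumElim_dotProduct_sumElim]
      simp only [Sum.elim_comp_inl, Sum.elim_comp_inr]
      rw [dotProduct_add, dotProduct_add, neg_mulVec, neg_mulVec, dotProduct_neg, dotProduct_neg,
        smul_mulVec, smul_mulVec, dotProduct_smul, dotProduct_smul]
      have hsymm : v ⬝ᵥ (Sxyᵀ *ᵥ u) = u ⬝ᵥ (Sxy *ᵥ v) := by
        rw [dot_mulVec_symm, transpose_transpose, dotProduct_comm]
      rw [hsymm, smul_eq_mul, smul_eq_mul, ← hqx, ← hqy]
      ring
    have hcross1 : u ⬝ᵥ (Sxy *ᵥ v) = (P *ᵥ u) ⬝ᵥ (T *ᵥ (Q *ᵥ v)) := by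
      rw [← hmat, ← mulVec_mulVec, ← mulVec_mulVec, dot_mulVec_symm, hPt]
    have hPu : vnorm (P *ᵥ u) ^ 2 = qx := by
      rw [vnorm_sq, dot_mulVec_symm, hPt, mulVec_mulVec, hPP, dotProduct_comm]
    have hQv : vnorm (Q *ᵥ v) ^ 2 = qy := by
      rw [vnorm_sq, dot_mulVec_symm, hQt, mulVec_mulVec, hQQ, dotProduct_comm]
    have hcs : |(P *ᵥ u) ⬝ᵥ (T *ᵥ (Q *ᵥ v))| ≤ vnorm (P *ᵥ u) * vnorm (T *ᵥ (Q *ᵥ v)) :=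
      abs_dot_le _ _
    have hop : vnorm (T *ᵥ (Q *ᵥ v)) ≤ ρ1 * vnorm (Q *ᵥ v) := hρ1 ▸ vnorm_mulVec_le T (Q *ᵥ v)
    have hcross : |u ⬝ᵥ (Sxy *ᵥ v)| ≤ ρ1 * (qx + qy) / 2 := by
      rw [hcross1]
      have h3 : vnorm (P *ᵥ u) * vnorm (T *ᵥ (Q *ᵥ v)) ≤
          vnorm (P *ᵥ u) * (ρ1 * vnorm (Q *ᵥ v)) :=
        mul_le_mul_of_nonneg_left hop (vnorm_nonneg _)
      nlinarith [mul_nonneg hρnn (sq_nonneg (vnorm (P *ᵥ u) - vnorm (Q *ᵥ v)))]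
    have habs1 := le_abs_self (u ⬝ᵥ (Sxy *ᵥ v))
    have habs2 := neg_abs_le (u ⬝ᵥ (Sxy *ᵥ v))
    constructor
    · have hsum : γ * (z ⬝ᵥ z) ≤ qx + qy := by rw [hzz]; linarith
      have h5 : (lam - ρ1) * (γ * (z ⬝ᵥ z)) ≤ (lam - ρ1) * (qx + qy) :=
        mul_le_mul_of_nonneg_left hsum (by linarith)
      have h6 : (lam - ρ1) * (qx + qy) ≤ z ⬝ᵥ (Alam *ᵥ z) := by
        rw [hform]; ring_nf; ring_nf at hcross; linarith
      calc ((lam - ρ1) * γ) * (z ⬝ᵥ z) = (lam - ρ1) * (γ * (z ⬝ᵥ z)) := by ring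
        _ ≤ (lam - ρ1) * (qx + qy) := h5
        _ ≤ _ := h6
    · have h7 : z ⬝ᵥ (Alam *ᵥ z) ≤ (lam + ρ1) * (qx + qy) := by
        rw [hform]; nlinarith
      have hsum2 : qx + qy ≤ z ⬝ᵥ z := by rw [hzz]; linarith
      have h8 : (lam + ρ1) * (qx + qy) ≤ (lam + ρ1) * (z ⬝ᵥ z) :=
        mul_le_mul_of_nonneg_left hsum2 (by linarith)
      linarith
  have hherm : Alam.IsHermitian := by
    rw [hA]
    have hxt : Sxxᵀ = Sxx := by rw [← conjT_eq_transpose]; exact hx.1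
    have hyt : Syyᵀ = Syy := by rw [← conjT_eq_transpose]; exact hy.1
    show _ᴴ = _
    rw [conjT_eq_transpose, fromBlocks_transpose, transpose_smul, transpose_smul, hxt, hyt,
      transpose_neg, transpose_neg, transpose_transpose]
  constructor
  · refine PosDef.of_dotProduct_mulVec_pos hherm fun z hz => ?_
    rw [star_trivial]
    have h1 := (key z).1
    have h2 : 0 < z ⬝ᵥ z := dot_self_pos hz
    have h3 : 0 < ((lam - ρ1) * γ) * (z ⬝ᵥ z) :=
      mul_pos (mul_pos (by linarith) hγ) h2
    linarith
  · rintro μ ⟨w, hw, hmw⟩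
    have h1 := (key w).1
    have h2 := (key w).2
    have hdd : w ⬝ᵥ (Alam *ᵥ w) = μ * (w ⬝ᵥ w) := by
      rw [hmw, dotProduct_smul, smul_eq_mul]
    have hpos : 0 < w ⬝ᵥ w := dot_self_pos hw
    rw [hdd] at h1 h2
    exact ⟨le_of_mul_le_mul_right (by linarith) hpos,
      le_of_mul_le_mul_right (by linarith) hpos⟩
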